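/- arXiv:0811.0129 — 2 statements merged into one kernel-verified Lean document; each statement's English description precedes it below -/
import Mathlib

section
/- Let A be an algebra over a field K with elements e, f, ω, ω' where ω, ω' are invertible, satisfying ω e ω^{-1} = q e, ω' e ω'^{-1} = q^{-1} e, ω f ω^{-1} = q^{-1} f, ω' f ω'^{-1} = q f, ωω' = ω'ω, and ef - fe = (q/(q-1))(ω - ω'), for a scalar q ≠ 0, 1. Then for all m ≥ 1: e f^m = f^m e + (q/(q-1)) f^{m-1} ((m)_{q^{-1}} ω - (m)_q ω'), where (m)_t = 1 + t + ... + t^{m-1}. -/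
/-- The `t`-integer `(m)_t = 1 + t + ⋯ + t^{m-1}`. -/
def qint {K : Type*} [Field K] (t : K) (m : ℕ) : K :=
  ∑ i ∈ Finset.range m, t ^ i

lemma qint_succ {K : Type*} [Field K] (t : K) (m : ℕ) :
    qint t (m + 1) = t * qint t m + 1 := by
  simp [qint, geom_sum_succ]

/-- in a `K`-algebra with elements `e, f` and invertible commuting
`ω, ω'` satisfying the rank-one multi-parameter quantum group relations,
`e f^m = f^m e + (q/(q-1)) f^{m-1} ((m)_{q⁻¹} ω - (m)_q ω')` for all `m ≥ 1`. -/
theorem ef_pow_commutation {K A : Type*} [Field K] [Ring A] [Algebra K A]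
    (q : K) (hq0 : q ≠ 0) (hq1 : q ≠ 1)
    (e f ω ω' : A) (hω : IsUnit ω) (hω' : IsUnit ω')
    (hcomm : ω * ω' = ω' * ω)
    (hωe : ω * e = q • (e * ω)) (hω'e : ω' * e = q⁻¹ • (e * ω'))
    (hωf : ω * f = q⁻¹ • (f * ω)) (hω'f : ω' * f = q • (f * ω'))
    (heff : e * f - f * e = (q / (q - 1)) • (ω - ω'))
    (m : ℕ) (hm : 1 ≤ m) :
    e * f ^ m
      = f ^ m * e +
          (q / (q - 1)) • (f ^ (m - 1) * (qint q⁻¹ m • ω - qint q m • ω')) := by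
  have hef : e * f = f * e + (q / (q - 1)) • (ω - ω') := by
    rw [← heff]; abel
  obtain ⟨n, rfl⟩ : ∃ n, m = n + 1 := ⟨m - 1, (Nat.succ_pred_eq_of_pos hm).symm⟩
  simp only [Nat.add_sub_cancel]
  clear hm
  induction n with
  | zero =>
    simp [qint, hef]
  | succ n ih =>
    have key : (qint q⁻¹ (n + 1) • ω - qint q (n + 1) • ω') * f
        = f * ((q⁻¹ * qint q⁻¹ (n + 1)) • ω - (q * qint q (n + 1)) • ω') := by
      rw [sub_mul, smul_mul_assoc, smul_mul_assoc, hωf, hω'f, smul_smul, smul_smul,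
        mul_sub, mul_smul_comm, mul_smul_comm,
        mul_comm (qint q⁻¹ (n + 1)) q⁻¹, mul_comm (qint q (n + 1)) q]
    calc e * f ^ (n + 2)
        = (e * f ^ (n + 1)) * f := by rw [pow_succ, mul_assoc]
      _ = (f ^ (n + 1) * e + (q / (q - 1)) •
            (f ^ n * (qint q⁻¹ (n+1) • ω - qint q (n+1) • ω'))) * f := by rw [ih]
      _ = f ^ (n + 1) * (e * f) + (q / (q - 1)) •
            (f ^ n * ((qint q⁻¹ (n+1) • ω - qint q (n+1) • ω') * f)) := by
          rw [add_mul, smul_mul_assoc, mul_assoc, mul_assoc]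
      _ = f ^ (n + 1) * (f * e + (q / (q - 1)) • (ω - ω')) + (q / (q - 1)) •
            (f ^ (n + 1) * ((q⁻¹ * qint q⁻¹ (n+1)) • ω - (q * qint q (n+1)) • ω')) := by
          rw [hef, key, ← mul_assoc, ← pow_succ]
      _ = f ^ (n + 2) * e + (q / (q - 1)) •
            (f ^ (n + 1) * (qint q⁻¹ (n + 2) • ω - qint q (n + 2) • ω')) := by
          simp only [qint_succ]
          simp only [mul_add, mul_sub, mul_smul_comm, add_smul, one_smul, smul_sub, smul_add,
            pow_succ, mul_assoc]
          module
end

section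
/- Let (a_{ij}) be a symmetrizable GCM and q_{ij} ∈ K^× with q_{ij}q_{ji} = q_{ii}^{a_{ij}}, q_{ii} not a root of unity. Then in the quantum shuffle algebra (F, ⋆), the quantum Serre relation holds: for i ≠ j, ∑_{k=0}^{1-a_{ij}} (-1)^k binom(1-a_{ij}, k)_{q_{ii}} q_{ii}^{k(k-1)/2} q_{ij}^k · w_i^{⋆(1-a_{ij}-k)} ⋆ w_j ⋆ w_i^{⋆k} = 0. -/
/-- The free associative algebra `F` on generators `w_i` (`i ∈ I`), realized as
the monoid algebra of the free monoid on `I` (words = lists). -/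
abbrev FA (K I : Type*) [Field K] : Type _ := MonoidAlgebra K (FreeMonoid I)

variable {K I : Type*} [Field K] [Fintype I] [DecidableEq I]

/-- The generator `w_i` of the free algebra. -/
noncomputable def wgen (K : Type*) [Field K] {I : Type*} (i : I) : FA K I :=
  MonoidAlgebra.single (FreeMonoid.of i) 1

/-- `q_{α_i, ν}` where `ν` is the degree of the word `w` (here `w` is a list of
letters, and the degree records the number of occurrences of each letter). -/
noncomputable def qrow (qm : I → I → K) (i : I) (w : List I) : K :=
  ∏ k : I, qm i k ^ (w.count k)

/-- Auxiliary recursion for the quantum shuffle product of two basis words;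
the arguments are the *reversed* words. It implements
`(x w_i) ⋆ (y w_j) = (x w_i ⋆ y) w_j + q_{α_i, ν+α_j} (x ⋆ y w_j) w_i`. -/
noncomputable def shAux (qm : I → I → K) : List I → List I → FA K I
  | [], b => MonoidAlgebra.single (FreeMonoid.ofList b.reverse) 1
  | a, [] => MonoidAlgebra.single (FreeMonoid.ofList a.reverse) 1
  | i :: a', j :: b' =>
      shAux qm (i :: a') b' * MonoidAlgebra.single (FreeMonoid.of j) 1
        + (qrow qm i b' * qm i j) •
            (shAux qm a' (j :: b') * MonoidAlgebra.single (FreeMonoid.of i) 1)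
  termination_by a b => a.length + b.length

/-- The quantum shuffle product `⋆` on the free algebra, extended bilinearly
from basis words. -/
noncomputable def shuffle (qm : I → I → K) (x y : FA K I) : FA K I :=
  Finsupp.sum x.coeff fun a ca =>
    Finsupp.sum y.coeff fun b cb =>
      (ca * cb) • shAux qm (FreeMonoid.toList a).reverse (FreeMonoid.toList b).reverse

/-- The `m`-fold quantum shuffle power `w_i^{⋆m}`. -/
noncomputable def starPow (qm : I → I → K) (i : I) : ℕ → FA K I
  | 0 => 1
  | n + 1 => shuffle qm (starPow qm i n) (wgen K i)

/-- The Gaussian binomial coefficient `binom(n,k)_t`, via the Pascal recursion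
`binom(n,k)_t = t^k binom(n-1,k)_t + binom(n-1,k-1)_t`. -/
noncomputable def qbinom (t : K) : ℕ → ℕ → K
  | _, 0 => 1
  | 0, _ + 1 => 0
  | n + 1, k + 1 => t ^ (k + 1) * qbinom t n (k + 1) + qbinom t n k

section Aux
variable {K I : Type*} [Field K] [Fintype I] [DecidableEq I]

lemma shAux_nil (qm : I → I → K) (b : List I) : shAux qm [] b = MonoidAlgebra.single (FreeMonoid.ofList b.reverse) 1 := by rw [shAux]
lemma shAux_nil' (qm : I → I → K) (x : I) (a : List I) : shAux qm (x :: a) [] = MonoidAlgebra.single (FreeMonoid.ofList (x::a).reverse) 1 := by rw [shAux]; simp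
lemma shAux_cons (qm : I → I → K) (x y : I) (a b : List I) : shAux qm (x :: a) (y :: b) =
      shAux qm (x :: a) b * MonoidAlgebra.single (FreeMonoid.of y) 1
        + (qrow qm x b * qm x y) •
            (shAux qm a (y :: b) * MonoidAlgebra.single (FreeMonoid.of x) 1) := by rw [shAux]
end Aux

namespace SerreAux
variable {K : Type*} [Field K]

/-- quantum integer `[n]_t = 1 + t + ... + t^{n-1}` -/
noncomputable def qint (t : K) (n : ℕ) : K := ∑ k ∈ Finset.range n, t ^ k

/-- quantum factorial -/
noncomputable def qfact (t : K) (n : ℕ) : K := ∏ k ∈ Finset.range n, qint t (k + 1)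

lemma qint_add (t : K) (a b : ℕ) : qint t (a + b) = qint t a + t ^ a * qint t b := by
  unfold qint
  rw [Finset.sum_range_add, Finset.mul_sum]
  simp [pow_add]

lemma qint_one (t : K) : qint t 1 = 1 := by simp [qint]

lemma qint_succ (t : K) (n : ℕ) : qint t (n + 1) = qint t n + t ^ n := by
  rw [qint_add, qint_one, mul_one]

lemma qint_succ' (t : K) (n : ℕ) : qint t (n + 1) = 1 + t * qint t n := by
  have := qint_add t 1 n
  rw [qint_one, pow_one] at this
  rw [show n + 1 = 1 + n by omega, this]

lemma qfact_succ (t : K) (n : ℕ) : qfact t (n + 1) = qfact t n * qint t (n + 1) :=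
  Finset.prod_range_succ _ _

lemma qfact_zero (t : K) : qfact t 0 = 1 := rfl

lemma qbinom_zero (t : K) (n : ℕ) : qbinom t n 0 = 1 := by cases n <;> rfl

lemma qbinom_succ (t : K) (n k : ℕ) :
    qbinom t (n + 1) (k + 1) = t ^ (k + 1) * qbinom t n (k + 1) + qbinom t n k := rfl

lemma qbinom_eq_zero (t : K) : ∀ n k : ℕ, n < k → qbinom t n k = 0 := by
  intro n
  induction n with
  | zero => intro k hk; match k, hk with | k+1, _ => rfl
  | succ n ih =>
    intro k hk
    match k, hk with
    | k+1, hk =>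
      rw [qbinom_succ, ih _ (by omega), ih _ (by omega)]
      ring

lemma qbinom_self (t : K) (n : ℕ) : qbinom t n n = 1 := by
  induction n with
  | zero => rfl
  | succ n ih => rw [qbinom_succ, ih, qbinom_eq_zero t n (n+1) (by omega)]; ring

lemma qbinom_one (t : K) (n : ℕ) : qbinom t n 1 = qint t n := by
  induction n with
  | zero => simp [qint]; rfl
  | succ n ih =>
    have h : qbinom t (n+1) (0+1) = t ^ (0+1) * qbinom t n (0+1) + qbinom t n 0 :=
      qbinom_succ t n 0
    simp only [Nat.zero_add, pow_one] at h
    rw [h, ih, qbinom_zero, qint_succ']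
    ring

lemma pascal2 (t : K) : ∀ n k : ℕ, k ≤ n →
    qbinom t (n + 1) (k + 1) = qbinom t n (k + 1) + t ^ (n - k) * qbinom t n k := by
  intro n
  induction n with
  | zero =>
    intro k hk
    interval_cases k
    have hz := qbinom_eq_zero t 0 1 (by omega)
    simp [qbinom_self, hz]
  | succ n ih =>
    intro k hk
    match k with
    | 0 =>
      have h : qbinom t (n+1+1) (0+1) = t ^ (0+1) * qbinom t (n+1) (0+1) + qbinom t (n+1) 0 :=
        qbinom_succ t (n+1) 0
      simp only [Nat.zero_add, pow_one] at h ⊢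
      rw [h, qbinom_zero, qbinom_one, Nat.sub_zero, mul_one]
      have h1 := qint_succ t (n+1)
      have h2 := qint_succ' t (n+1)
      linear_combination h1 - h2
    | k + 1 =>
      rcases Nat.lt_or_ge k n with h | h
      · have E1 : qbinom t (n+2) (k+2) = t^(k+2) * qbinom t (n+1) (k+2) + qbinom t (n+1) (k+1) :=
          qbinom_succ t (n+1) (k+1)
        have E2 : qbinom t (n+1) (k+2) = qbinom t n (k+2) + t^(n-(k+1)) * qbinom t n (k+1) :=
          ih (k+1) h
        have E3 : qbinom t (n+1) (k+1) = qbinom t n (k+1) + t^(n-k) * qbinom t n k :=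
          ih k (by omega)
        have E4 : qbinom t (n+1) (k+1) = t^(k+1) * qbinom t n (k+1) + qbinom t n k :=
          qbinom_succ t n k
        have E5 : qbinom t (n+1) (k+2) = t^(k+2) * qbinom t n (k+2) + qbinom t n (k+1) :=
          qbinom_succ t n (k+1)
        have hsub : n - k = (n - (k+1)) + 1 := by omega
        rw [hsub, pow_succ] at E3
        have hgoal : n + 1 - (k + 1) = (n - (k+1)) + 1 := by omega
        rw [show (k+1+1) = k+2 by rfl, show (n+1+1) = n+2 by rfl, hgoal, pow_succ]
        linear_combination E1 + t^(k+2) * E2 + E3 - (t^(n-(k+1)) * t) * E4 - E5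
      · have hk' : k = n := by omega
        subst hk'
        rw [qbinom_self, qbinom_eq_zero t (k+1) (k+2) (by omega), qbinom_self]
        simp

/-- triangular number helper -/
lemma ch_succ (l : ℕ) : (l + 1) * l / 2 = l * (l - 1) / 2 + l := by
  have h1 := Nat.choose_two_right l
  have h2 := Nat.choose_two_right (l + 1)
  have h3 : (l + 1).choose 2 = l.choose 1 + l.choose 2 := Nat.choose_succ_succ l 1
  rw [Nat.choose_one_right] at h3
  simp only [Nat.add_sub_cancel] at h2
  omega

lemma ch_add (x y : ℕ) : (x + y) * (x + y - 1) / 2 = x * (x - 1) / 2 + y * (y - 1) / 2 + x * y := by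
  induction y with
  | zero => simp
  | succ y ih =>
    have h1 : (x + y + 1) * (x + y) / 2 = (x + y) * (x + y - 1) / 2 + (x + y) := ch_succ (x + y)
    have h2 : (y + 1) * y / 2 = y * (y - 1) / 2 + y := ch_succ y
    have h3 : x * (y + 1) = x * y + x := by ring
    rw [show x + (y+1) = (x + y) + 1 by omega, show (x+y+1) - 1 = x + y by omega, h1, ih,
      show (y+1) - 1 = y by omega, h2, h3]
    omega

/-- Gauss q-binomial theorem. -/
lemma gauss (t : K) : ∀ (N : ℕ) (x : K),
    ∑ l ∈ Finset.range (N + 1), (-1 : K) ^ l * t ^ (l * (l - 1) / 2) * x ^ l * qbinom t N l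
      = ∏ n ∈ Finset.range N, (1 - t ^ n * x) := by
  intro N
  induction N with
  | zero => intro x; simp [qbinom_zero]
  | succ N ih =>
    intro x
    rw [Finset.sum_range_succ' _ (N + 1)]
    simp only [Nat.add_sub_cancel]
    have hterm : ∀ l ∈ Finset.range (N + 1),
        (-1:K) ^ (l+1) * t ^ ((l+1) * l / 2) * x ^ (l+1) * qbinom t (N+1) (l+1)
        = (-1:K) ^ (l+1) * t ^ ((l+1) * l / 2) * x ^ (l+1) * qbinom t N (l+1)
          + (-(t ^ N * x)) * ((-1:K) ^ l * t ^ (l * (l-1) / 2) * x ^ l * qbinom t N l) := by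
      intro l hl
      rw [Finset.mem_range] at hl
      rw [pascal2 t N l (by omega), ch_succ l]
      have hp : t ^ (l * (l-1) / 2 + l) * t ^ (N - l) = t ^ (l * (l-1)/2) * t ^ N := by
        rw [← pow_add, ← pow_add]; congr 1; omega
      linear_combination ((-1:K)^(l+1) * x^(l+1) * qbinom t N l) * hp
    rw [Finset.sum_congr rfl hterm, Finset.sum_add_distrib, ← Finset.mul_sum, ih x]
    have hshift : ∑ l ∈ Finset.range (N + 1),
        (-1:K) ^ (l+1) * t ^ ((l+1) * l / 2) * x ^ (l+1) * qbinom t N (l+1)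
        + (-1:K) ^ 0 * t ^ (0 * (0-1) / 2) * x ^ 0 * qbinom t (N+1) 0
        = ∑ l ∈ Finset.range (N + 1), (-1:K) ^ l * t ^ (l * (l-1) / 2) * x ^ l * qbinom t N l := by
      have h1 : ∑ l ∈ Finset.range (N + 2), (-1:K) ^ l * t ^ (l * (l-1) / 2) * x ^ l * qbinom t N l
          = ∑ l ∈ Finset.range (N + 1),
              (-1:K) ^ (l+1) * t ^ ((l+1) * ((l+1)-1) / 2) * x ^ (l+1) * qbinom t N (l+1)
            + (-1:K) ^ 0 * t ^ (0 * (0-1) / 2) * x ^ 0 * qbinom t N 0 :=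
        Finset.sum_range_succ' _ (N + 1)
      have h2 : ∑ l ∈ Finset.range (N + 2), (-1:K) ^ l * t ^ (l * (l-1) / 2) * x ^ l * qbinom t N l
          = ∑ l ∈ Finset.range (N + 1), (-1:K) ^ l * t ^ (l * (l-1) / 2) * x ^ l * qbinom t N l
            + (-1:K) ^ (N+1) * t ^ ((N+1) * ((N+1)-1) / 2) * x ^ (N+1) * qbinom t N (N+1) :=
        Finset.sum_range_succ _ (N + 1)
      rw [qbinom_eq_zero t N (N+1) (by omega)] at h2
      rw [qbinom_zero] at h1 ⊢
      simp only [Nat.add_sub_cancel] at h1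
      linear_combination h1.symm.trans h2
    rw [add_right_comm, hshift, ih x, Finset.prod_range_succ]
    ring

lemma qfact_binom (t : K) : ∀ n k : ℕ, k ≤ n →
    qfact t k * qfact t (n - k) * qbinom t n k = qfact t n := by
  intro n
  induction n with
  | zero =>
    intro k hk
    interval_cases k
    simp [qfact_zero, qbinom_zero]
  | succ n ih =>
    intro k hk
    match k with
    | 0 => simp [qfact_zero, qbinom_zero]
    | k + 1 =>
      rcases Nat.lt_or_ge k n with h | h
      · have hk1 : k + 1 ≤ n := h
        have e1 : qfact t (k+1) * qfact t (n - (k+1)) * qbinom t n (k+1) = qfact t n :=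
          ih (k+1) hk1
        have e2 : qfact t k * qfact t (n - k) * qbinom t n k = qfact t n := ih k (by omega)
        have hsub : n + 1 - (k + 1) = (n - (k+1)) + 1 := by omega
        have hsub2 : n - k = (n - (k+1)) + 1 := by omega
        rw [hsub, qbinom_succ, qfact_succ t (n - (k+1)), qfact_succ t k]
        rw [hsub2, qfact_succ t (n - (k+1))] at e2
        rw [qfact_succ t k] at e1
        have e3 : qfact t (n + 1) = qfact t n * qint t (n + 1) := qfact_succ t n
        have e4 : qint t (n + 1) = qint t (k+1) + t ^ (k+1) * qint t ((n - (k+1)) + 1) := by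
          have := qint_add t (k+1) ((n - (k+1)) + 1)
          rw [show (k+1) + ((n - (k+1)) + 1) = n + 1 by omega] at this
          exact this
        linear_combination t^(k+1) * qint t (n-(k+1)+1) * e1 + qint t (k+1) * e2 - e3
          - qfact t n * e4
      · have hk' : k = n := by omega
        subst hk'
        rw [qbinom_self, Nat.sub_self, qfact_zero]
        ring

end SerreAux

namespace SerreAux
set_option linter.unusedSectionVars false

variable {K I : Type*} [Field K] [Fintype I] [DecidableEq I]

/-- basis word -/
noncomputable def ws (K : Type*) [Field K] {I : Type*} (l : List I) : FA K I :=
  MonoidAlgebra.single (FreeMonoid.ofList l) 1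

lemma ws_mul (l : List I) (x : I) :
    ws K l * MonoidAlgebra.single (FreeMonoid.of x) 1 = ws K (l ++ [x]) := by
  unfold ws
  rw [MonoidAlgebra.single_mul_single, one_mul]
  rfl

lemma shuffle_single_single (qm : I → I → K) (a b : FreeMonoid I) (c d : K) :
    shuffle qm (MonoidAlgebra.single a c) (MonoidAlgebra.single b d)
      = (c * d) • shAux qm (FreeMonoid.toList a).reverse (FreeMonoid.toList b).reverse := by
  unfold shuffle
  rw [MonoidAlgebra.coeff_single, MonoidAlgebra.coeff_single]
  rw [Finsupp.sum_single_index (by simp), Finsupp.sum_single_index (by simp)]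

lemma shuffle_ws (qm : I → I → K) (u v : List I) :
    shuffle qm (ws K u) (ws K v) = shAux qm u.reverse v.reverse := by
  rw [ws, ws, shuffle_single_single]
  simp

lemma shuffle_zero_left (qm : I → I → K) (y : FA K I) : shuffle qm 0 y = 0 := by
  unfold shuffle; rw [MonoidAlgebra.coeff_zero]; exact
  Finsupp.sum_zero_index

lemma shuffle_add_left (qm : I → I → K) (x x' y : FA K I) :
    shuffle qm (x + x') y = shuffle qm x y + shuffle qm x' y := by
  unfold shuffle
  rw [MonoidAlgebra.coeff_add]
  apply Finsupp.sum_add_index' (by simp) (fun a b₁ b₂ => ?_)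
  rw [← Finsupp.sum_add]
  congr 1
  ext w cw
  rw [add_mul, add_smul]

lemma shuffle_smul_left (qm : I → I → K) (c : K) (x y : FA K I) :
    shuffle qm (c • x) y = c • shuffle qm x y := by
  unfold shuffle
  rw [MonoidAlgebra.coeff_smul]
  rw [Finsupp.sum_smul_index (by simp), Finsupp.smul_sum]
  apply Finsupp.sum_congr
  intro a _
  rw [Finsupp.smul_sum]
  apply Finsupp.sum_congr
  intro b _
  rw [mul_assoc, mul_smul]

lemma shuffle_smul_right (qm : I → I → K) (c : K) (x y : FA K I) :
    shuffle qm x (c • y) = c • shuffle qm x y := by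
  unfold shuffle
  rw [MonoidAlgebra.coeff_smul]
  rw [Finsupp.smul_sum]
  apply Finsupp.sum_congr
  intro a _
  rw [Finsupp.sum_smul_index (by simp), Finsupp.smul_sum]
  apply Finsupp.sum_congr
  intro b _
  rw [mul_left_comm, mul_smul]

lemma shuffle_sum_left (qm : I → I → K) {α : Type*} (s : Finset α) (f : α → FA K I)
    (y : FA K I) : shuffle qm (∑ k ∈ s, f k) y = ∑ k ∈ s, shuffle qm (f k) y := by
  induction s using Finset.cons_induction with
  | empty => simp [shuffle_zero_left]
  | cons a s ha ih => rw [Finset.sum_cons, Finset.sum_cons, shuffle_add_left, ih]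

lemma qrow_replicate (qm : I → I → K) (x y : I) (n : ℕ) :
    qrow qm x (List.replicate n y) = qm x y ^ n := by
  unfold qrow
  rw [Finset.prod_eq_single y (fun b _ hb => by simp [List.count_replicate, hb, Ne.symm hb])
    (fun h => absurd (Finset.mem_univ y) h)]
  simp

lemma qrow_nil (qm : I → I → K) (x : I) : qrow qm x ([] : List I) = 1 := by
  have := qrow_replicate qm x x 0
  simpa using this

lemma ws_def (l : List I) : MonoidAlgebra.single (FreeMonoid.ofList l) 1 = ws K l := rfl

lemma shAux_repl_single (qm : I → I → K) (i : I) (n : ℕ) :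
    shAux qm (List.replicate n i) [i]
      = qint (qm i i) (n + 1) • ws K (List.replicate (n + 1) i) := by
  induction n with
  | zero =>
    rw [show List.replicate 0 i = [] from rfl, shAux_nil]
    simp [qint_one, ws]
  | succ n ih =>
    have hrev : (i :: List.replicate n i).reverse = List.replicate (n + 1) i := by
      rw [← List.replicate_succ, List.reverse_replicate]
    rw [List.replicate_succ, shAux_cons, shAux_nil', hrev, qrow_nil, ih, one_mul, ws_def,
      smul_mul_assoc, smul_smul, ws_mul, ← List.replicate_succ',
      qint_succ' (qm i i) (n+1), add_smul, one_smul]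

lemma shAux_repl_repl (qm : I → I → K) (i : I) :
    ∀ p k : ℕ, shAux qm (List.replicate p i) (List.replicate k i)
      = qbinom (qm i i) (p + k) k • ws K (List.replicate (p + k) i) := by
  intro p
  induction p with
  | zero =>
    intro k
    rw [show List.replicate 0 i = [] from rfl, shAux_nil, List.reverse_replicate, ws_def,
      Nat.zero_add, qbinom_self, one_smul]
  | succ p ihp =>
    intro k
    induction k with
    | zero =>
      rw [show List.replicate 0 i = [] from rfl, List.replicate_succ, shAux_nil',
        ← List.replicate_succ, List.reverse_replicate, ws_def, qbinom_zero, one_smul]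
    | succ k ihk =>
      rw [List.replicate_succ (a := i) (n := p), List.replicate_succ (a := i) (n := k), shAux_cons, ← List.replicate_succ,
        ← List.replicate_succ, ihk, ihp (k+1), qrow_replicate, smul_mul_assoc, smul_mul_assoc,
        smul_smul, ws_mul, ws_mul, ← List.replicate_succ', ← List.replicate_succ']
      have h1 : p + 1 + (k + 1) = p + (k + 1) + 1 := by omega
      have h2 : p + 1 + k = p + k + 1 := by omega
      rw [h1, h2, show p + k + 1 + 1 = p + (k + 1) + 1 from by omega, ← add_smul]
      congr 1
      rw [show p + (k + 1) + 1 = (p + k + 1) + 1 from by omega, qbinom_succ,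
        show p + (k + 1) = p + k + 1 from by omega]
      ring

lemma starPow_eq (qm : I → I → K) (i : I) (n : ℕ) :
    starPow qm i n = qfact (qm i i) n • ws K (List.replicate n i) := by
  induction n with
  | zero =>
    rw [show starPow qm i 0 = 1 from rfl, qfact_zero, one_smul]
    rfl
  | succ n ih =>
    rw [show starPow qm i (n+1) = shuffle qm (starPow qm i n) (wgen K i) from rfl, ih,
      shuffle_smul_left, show wgen K i = ws K [i] from rfl, shuffle_ws,
      List.reverse_replicate, show [i].reverse = [i] from rfl, shAux_repl_single,
      smul_smul, qfact_succ]

lemma shAux_repl_j (qm : I → I → K) (i j : I) (a : ℕ) :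
    shAux qm (List.replicate a i) [j]
      = ∑ t ∈ Finset.range (a + 1), (qm i j ^ t) •
          ws K (List.replicate (a - t) i ++ j :: List.replicate t i) := by
  induction a with
  | zero =>
    rw [show List.replicate 0 i = [] from rfl, shAux_nil]
    simp [ws]
  | succ a ih =>
    have hrev : (i :: List.replicate a i).reverse = List.replicate (a + 1) i := by
      rw [← List.replicate_succ, List.reverse_replicate]
    rw [List.replicate_succ, shAux_cons, shAux_nil', hrev, qrow_nil, ih, one_mul, ws_def,
      ws_mul, Finset.sum_mul, Finset.smul_sum, Finset.sum_range_succ' _ (a + 1), add_comm]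
    congr 1
    · apply Finset.sum_congr rfl
      intro t ht
      rw [Finset.mem_range] at ht
      rw [smul_mul_assoc, ws_mul, smul_smul, ← pow_succ']
      congr 2
      rw [show a + 1 - (t + 1) = a - t from by omega, List.append_assoc, List.cons_append,
        ← List.replicate_succ']
    · simp


lemma rev_word (i j : I) (x y : ℕ) :
    (List.replicate x i ++ j :: List.replicate y i).reverse
      = List.replicate y i ++ j :: List.replicate x i := by
  rw [List.reverse_append, List.reverse_cons, List.reverse_replicate, List.reverse_replicate,
    List.append_assoc, List.singleton_append]

lemma word_app (i j : I) (x y : ℕ) :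
    (List.replicate x i ++ j :: List.replicate y i) ++ [i]
      = List.replicate x i ++ j :: List.replicate (y + 1) i := by
  rw [List.append_assoc, List.cons_append, ← List.replicate_succ']

lemma shAux_main (qm : I → I → K) (i j : I) :
    ∀ t k p : ℕ,
    shAux qm (List.replicate t i ++ j :: List.replicate p i) (List.replicate k i)
      = ∑ u ∈ Finset.range (k + 1),
          (qm j i ^ (k - u) * qm i i ^ (t * (k - u)) * qbinom (qm i i) (t + u) u *
            qbinom (qm i i) (p + k - u) (k - u)) •
            ws K (List.replicate (p + k - u) i ++ j :: List.replicate (t + u) i) := by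
  have base : ∀ t p : ℕ, shAux qm (List.replicate t i ++ j :: List.replicate p i) []
      = ws K (List.replicate p i ++ j :: List.replicate t i) := by
    intro t p
    cases t with
    | zero =>
      simp only [List.replicate_zero, List.nil_append]
      rw [shAux_nil']
      rw [show (j :: List.replicate p i) = List.replicate 0 i ++ j :: List.replicate p i from rfl,
        rev_word, ws_def]
      rfl
    | succ t =>
      rw [List.replicate_succ, List.cons_append, shAux_nil',
        show (i :: (List.replicate t i ++ j :: List.replicate p i))
          = List.replicate (t+1) i ++ j :: List.replicate p i from by
            rw [List.replicate_succ, List.cons_append],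
        rev_word, ws_def, List.replicate_succ]
  intro t
  induction t with
  | zero =>
    intro k
    induction k with
    | zero =>
      intro p
      have b := base 0 p
      simp only [List.replicate_zero, List.nil_append] at b ⊢
      rw [b, Finset.sum_range_one]
      simp [qbinom_zero, qbinom_self]
    | succ k ihk =>
      intro p
      have ihk' := ihk p
      simp only [List.replicate_zero, List.nil_append, Nat.zero_add, Nat.zero_mul, pow_zero] at ihk' ⊢
      rw [List.replicate_succ (a := i) (n := k), shAux_cons, ← List.replicate_succ, qrow_replicate, ihk',
        shAux_repl_repl qm i p (k+1), Finset.sum_mul, smul_mul_assoc, smul_smul, ws_mul,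
        Finset.sum_range_succ' _ (k+1)]
      congr 1
      · apply Finset.sum_congr rfl
        intro u hu
        rw [Finset.mem_range] at hu
        obtain ⟨d, rfl⟩ : ∃ d, k = u + d := ⟨k - u, by omega⟩
        rw [smul_mul_assoc, ws_mul, word_app,
          show u + d - u = d from by omega, show u + d + 1 - (u + 1) = d from by omega,
          show p + (u + d) - u = p + d from by omega,
          show p + (u + d + 1) - (u + 1) = p + d from by omega, qbinom_self, qbinom_self]
      · rw [Nat.sub_zero, Nat.sub_zero, qbinom_zero, pow_succ]
        congr 1
        ring
  | succ t iht =>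
    intro k
    induction k with
    | zero =>
      intro p
      rw [show List.replicate 0 i = ([] : List I) from rfl, base (t+1) p, Finset.sum_range_one]
      simp [qbinom_zero, qbinom_self]
    | succ k ihk =>
      intro p
      have hfold : i :: (List.replicate t i ++ j :: List.replicate p i)
          = List.replicate (t+1) i ++ j :: List.replicate p i := by
        rw [List.replicate_succ, List.cons_append]
      have h1 := ihk p
      have h2 := iht (k+1) p
      rw [List.replicate_succ (a := i) (n := t), List.cons_append, List.replicate_succ (a := i) (n := k), shAux_cons,
        ← List.replicate_succ (a := i) (n := k), hfold, h1, h2, qrow_replicate,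
        Finset.sum_mul, Finset.sum_mul, Finset.smul_sum]
      have hsplit : ∀ u ∈ Finset.range (k+1),
          (qm j i ^ (k + 1 - (u+1)) * qm i i ^ ((t+1) * (k + 1 - (u+1))) *
            qbinom (qm i i) (t + 1 + (u+1)) (u+1) *
            qbinom (qm i i) (p + (k+1) - (u+1)) (k + 1 - (u+1))) •
              ws K (List.replicate (p + (k+1) - (u+1)) i ++ j :: List.replicate (t + 1 + (u+1)) i)
          = (qm i i ^ k * qm i i) •
              ((qm j i ^ (k + 1 - (u+1)) * qm i i ^ (t * (k + 1 - (u+1))) *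
                qbinom (qm i i) (t + (u+1)) (u+1) *
                qbinom (qm i i) (p + (k+1) - (u+1)) (k + 1 - (u+1))) •
                ws K (List.replicate (p + (k+1) - (u+1)) i ++ j :: List.replicate (t + (u+1)) i)
                  * MonoidAlgebra.single (FreeMonoid.of i) 1)
            + ((qm j i ^ (k - u) * qm i i ^ ((t+1) * (k - u)) * qbinom (qm i i) (t + 1 + u) u *
                qbinom (qm i i) (p + k - u) (k - u)) •
                ws K (List.replicate (p + k - u) i ++ j :: List.replicate (t + 1 + u) i))
              * MonoidAlgebra.single (FreeMonoid.of i) 1 := by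
        intro u hu
        rw [Finset.mem_range] at hu
        obtain ⟨d, rfl⟩ : ∃ d, k = u + d := ⟨k - u, by omega⟩
        simp only [smul_mul_assoc, ws_mul, word_app, smul_smul]
        rw [show u + d + 1 - (u + 1) = d from by omega, show u + d - u = d from by omega,
          show p + (u + d + 1) - (u + 1) = p + d from by omega,
          show p + (u + d) - u = p + d from by omega,
          show t + (u + 1) + 1 = t + 1 + (u + 1) from by omega,
          show t + 1 + u + 1 = t + 1 + (u + 1) from by omega,
          ← add_smul]
        congr 1
        rw [show t + (u + 1) = t + u + 1 from by omega,
          show t + 1 + u = t + u + 1 from by omega,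
          show t + 1 + (u + 1) = (t + u + 1) + 1 from by omega, qbinom_succ]
        have hp : qm i i ^ ((t+1) * d) * qm i i ^ (u + 1)
            = (qm i i ^ (u + d) * qm i i) * qm i i ^ (t * d) := by
          rw [← pow_add, ← pow_succ, ← pow_add]
          congr 1
          ring
        linear_combination (qm j i ^ d * qbinom (qm i i) (t + u + 1) (u + 1) *
          qbinom (qm i i) (p + d) d) * hp
      have hzero :
          (qm i i ^ k * qm i i) •
              ((qm j i ^ (k + 1 - 0) * qm i i ^ (t * (k + 1 - 0)) *
                qbinom (qm i i) (t + 0) 0 *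
                qbinom (qm i i) (p + (k+1) - 0) (k + 1 - 0)) •
                ws K (List.replicate (p + (k+1) - 0) i ++ j :: List.replicate (t + 0) i)
                  * MonoidAlgebra.single (FreeMonoid.of i) 1)
          = (qm j i ^ (k + 1 - 0) * qm i i ^ ((t+1) * (k + 1 - 0)) *
              qbinom (qm i i) (t + 1 + 0) 0 *
              qbinom (qm i i) (p + (k+1) - 0) (k + 1 - 0)) •
              ws K (List.replicate (p + (k+1) - 0) i ++ j :: List.replicate (t + 1 + 0) i) := by
        simp only [smul_mul_assoc, ws_mul, word_app, smul_smul, Nat.sub_zero, Nat.add_zero,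
          qbinom_zero]
        congr 1
        have hp0 : (qm i i ^ k * qm i i) * qm i i ^ (t * (k + 1)) = qm i i ^ ((t+1) * (k+1)) := by
          rw [← pow_succ, ← pow_add]
          congr 1
          ring
        linear_combination (qm j i ^ (k+1) * qbinom (qm i i) (p + (k+1)) (k+1)) * hp0
      rw [Finset.sum_range_succ' _ (k+1), hzero]
      conv_rhs => rw [Finset.sum_range_succ' _ (k+1), Finset.sum_congr rfl hsplit,
        Finset.sum_add_distrib]
      abel

lemma Sk (qm : I → I → K) (i j : I) (a k : ℕ) :
    shuffle qm (shuffle qm (starPow qm i a) (wgen K j)) (starPow qm i k)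
      = ∑ t ∈ Finset.range (a + 1), ∑ u ∈ Finset.range (k + 1),
          (qfact (qm i i) a * qfact (qm i i) k * qm i j ^ t *
            (qm j i ^ (k - u) * qm i i ^ (t * (k - u)) * qbinom (qm i i) (t + u) u *
              qbinom (qm i i) (a - t + k - u) (k - u))) •
            ws K (List.replicate (a - t + k - u) i ++ j :: List.replicate (t + u) i) := by
  rw [starPow_eq qm i a, starPow_eq qm i k, show wgen K j = ws K [j] from rfl,
    shuffle_smul_left, shuffle_ws, List.reverse_replicate, List.reverse_singleton,
    shAux_repl_j, shuffle_smul_right, shuffle_smul_left, shuffle_sum_left]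
  simp only [shuffle_smul_left, shuffle_ws, rev_word, List.reverse_replicate, shAux_main qm i j,
    Finset.smul_sum, smul_smul]
  apply Finset.sum_congr rfl
  intro t _
  apply Finset.sum_congr rfl
  intro u _
  congr 1
  ring


lemma serre_core (qm : I → I → K) (i j : I) (m : ℕ) (hm : 1 ≤ m)
    (hq : qm i i ^ (m - 1) * (qm i j * qm j i) = 1) :
    ∑ k ∈ Finset.range (m + 1),
        ((-1 : K) ^ k * qbinom (qm i i) m k * qm i i ^ (k * (k - 1) / 2) * qm i j ^ k) •
          shuffle qm (shuffle qm (starPow qm i (m - k)) (wgen K j)) (starPow qm i k)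
      = 0 := by
  have hcanon : ∀ k ∈ Finset.range (m+1),
      ((-1 : K) ^ k * qbinom (qm i i) m k * qm i i ^ (k * (k - 1) / 2) * qm i j ^ k) •
        shuffle qm (shuffle qm (starPow qm i (m - k)) (wgen K j)) (starPow qm i k)
      = ∑ t ∈ Finset.range (m - k + 1), ∑ u ∈ Finset.range (k + 1),
          (((-1 : K) ^ k * qbinom (qm i i) m k * qm i i ^ (k * (k - 1) / 2) * qm i j ^ k) *
            (qfact (qm i i) (m - k) * qfact (qm i i) k * qm i j ^ t *
              (qm j i ^ (k - u) * qm i i ^ (t * (k - u)) * qbinom (qm i i) (t + u) u *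
                qbinom (qm i i) (m - k - t + k - u) (k - u)))) •
            ws K (List.replicate (m - k - t + k - u) i ++ j :: List.replicate (t + u) i) := by
    intro k _
    rw [Sk qm i j (m - k) k, Finset.smul_sum]
    apply Finset.sum_congr rfl
    intro t _
    rw [Finset.smul_sum]
    apply Finset.sum_congr rfl
    intro u _
    rw [smul_smul]
  rw [Finset.sum_congr rfl hcanon]
  -- convert to a sum over a sigma type
  have hsig : ∑ k ∈ Finset.range (m+1), ∑ t ∈ Finset.range (m - k + 1), ∑ u ∈ Finset.range (k + 1),
          (((-1 : K) ^ k * qbinom (qm i i) m k * qm i i ^ (k * (k - 1) / 2) * qm i j ^ k) *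
            (qfact (qm i i) (m - k) * qfact (qm i i) k * qm i j ^ t *
              (qm j i ^ (k - u) * qm i i ^ (t * (k - u)) * qbinom (qm i i) (t + u) u *
                qbinom (qm i i) (m - k - t + k - u) (k - u)))) •
            ws K (List.replicate (m - k - t + k - u) i ++ j :: List.replicate (t + u) i)
      = ∑ x ∈ (Finset.range (m+1)).sigma
            (fun k => Finset.range (m - k + 1) ×ˢ Finset.range (k + 1)),
          (((-1 : K) ^ x.1 * qbinom (qm i i) m x.1 * qm i i ^ (x.1 * (x.1 - 1) / 2) *
              qm i j ^ x.1) *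
            (qfact (qm i i) (m - x.1) * qfact (qm i i) x.1 * qm i j ^ x.2.1 *
              (qm j i ^ (x.1 - x.2.2) * qm i i ^ (x.2.1 * (x.1 - x.2.2)) *
                qbinom (qm i i) (x.2.1 + x.2.2) x.2.2 *
                qbinom (qm i i) (m - x.1 - x.2.1 + x.1 - x.2.2) (x.1 - x.2.2)))) •
            ws K (List.replicate (m - x.1 - x.2.1 + x.1 - x.2.2) i ++
              j :: List.replicate (x.2.1 + x.2.2) i) := by
    rw [Finset.sum_sigma]
    apply Finset.sum_congr rfl
    intro k _
    rw [Finset.sum_product]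
  rw [hsig]
  have hbij : ∑ x ∈ (Finset.range (m+1)).sigma
            (fun k => Finset.range (m - k + 1) ×ˢ Finset.range (k + 1)),
          (((-1 : K) ^ x.1 * qbinom (qm i i) m x.1 * qm i i ^ (x.1 * (x.1 - 1) / 2) *
              qm i j ^ x.1) *
            (qfact (qm i i) (m - x.1) * qfact (qm i i) x.1 * qm i j ^ x.2.1 *
              (qm j i ^ (x.1 - x.2.2) * qm i i ^ (x.2.1 * (x.1 - x.2.2)) *
                qbinom (qm i i) (x.2.1 + x.2.2) x.2.2 *
                qbinom (qm i i) (m - x.1 - x.2.1 + x.1 - x.2.2) (x.1 - x.2.2)))) •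
            ws K (List.replicate (m - x.1 - x.2.1 + x.1 - x.2.2) i ++
              j :: List.replicate (x.2.1 + x.2.2) i)
      = ∑ y ∈ (Finset.range (m+1)).sigma
            (fun b => Finset.range (b + 1) ×ˢ Finset.range (m - b + 1)),
          (qfact (qm i i) m * qm i j ^ y.1 *
            ((-1 : K) ^ (y.1 - y.2.1) * qm i i ^ ((y.1 - y.2.1) * ((y.1 - y.2.1) - 1) / 2) *
              (1 : K) ^ (y.1 - y.2.1) * qbinom (qm i i) y.1 (y.1 - y.2.1)) *
            ((-1 : K) ^ y.2.2 * qm i i ^ (y.2.2 * (y.2.2 - 1) / 2) *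
              (qm i i ^ y.1 * (qm i j * qm j i)) ^ y.2.2 * qbinom (qm i i) (m - y.1) y.2.2)) •
            ws K (List.replicate (m - y.1) i ++ j :: List.replicate y.1 i) := by
    apply Finset.sum_nbij' (i := fun x => ⟨x.2.1 + x.2.2, (x.2.1, x.1 - x.2.2)⟩)
      (j := fun y => ⟨y.1 - y.2.1 + y.2.2, (y.2.1, y.1 - y.2.1)⟩)
    · rintro ⟨k, t, u⟩ hx
      simp only [Finset.mem_sigma, Finset.mem_product, Finset.mem_range] at hx ⊢
      omega
    · rintro ⟨b, t, l⟩ hy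
      simp only [Finset.mem_sigma, Finset.mem_product, Finset.mem_range] at hy ⊢
      omega
    · rintro ⟨k, t, u⟩ hx
      simp only [Finset.mem_sigma, Finset.mem_product, Finset.mem_range] at hx
      simp only []
      rw [show t + u - t + (k - u) = k from by omega, show t + u - t = u from by omega]
    · rintro ⟨b, t, l⟩ hy
      simp only [Finset.mem_sigma, Finset.mem_product, Finset.mem_range] at hy
      simp only []
      rw [show t + (b - t) = b from by omega, show b - t + l - (b - t) = l from by omega]
    · rintro ⟨k, t, u⟩ hx
      simp only [Finset.mem_sigma, Finset.mem_product, Finset.mem_range] at hx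
      simp only []
      obtain ⟨l, rfl⟩ : ∃ l, k = u + l := ⟨k - u, by omega⟩
      obtain ⟨c, hc⟩ : ∃ c, m = t + (u + l) + c := ⟨m - (t + (u + l)), by omega⟩
      subst hc
      rw [show t + (u + l) + c - (u + l) - t + (u + l) - u = l + c from by omega,
        show t + (u + l) + c - (t + u) = l + c from by omega,
        show t + u - t = u from by omega,
        show u + l - u = l from by omega,
        show t + (u + l) + c - (u + l) = t + c from by omega]
      congr 1
      rw [← qfact_binom (qm i i) (t + (u + l) + c) (u + l) (by omega),
        show t + (u + l) + c - (u + l) = t + c from by omega,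
        ch_add u l]
      simp only [mul_pow]
      rw [← pow_mul, show (t + u) * l = t * l + u * l from by ring]
      simp only [pow_add, one_pow]
      ring
  rw [hbij]
  rw [Finset.sum_sigma]
  apply Finset.sum_eq_zero
  intro b hb
  rw [Finset.mem_range] at hb
  rw [Finset.sum_product]
  -- pull the smul out
  have hpull : ∑ t ∈ Finset.range (b + 1), ∑ l ∈ Finset.range (m - b + 1),
      (qfact (qm i i) m * qm i j ^ b *
        ((-1 : K) ^ (b - t) * qm i i ^ ((b - t) * ((b - t) - 1) / 2) *
          (1 : K) ^ (b - t) * qbinom (qm i i) b (b - t)) *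
        ((-1 : K) ^ l * qm i i ^ (l * (l - 1) / 2) *
          (qm i i ^ b * (qm i j * qm j i)) ^ l * qbinom (qm i i) (m - b) l)) •
        ws K (List.replicate (m - b) i ++ j :: List.replicate b i)
    = ((qfact (qm i i) m * qm i j ^ b) *
        (∑ t ∈ Finset.range (b + 1), (-1 : K) ^ (b - t) *
          qm i i ^ ((b - t) * ((b - t) - 1) / 2) * (1 : K) ^ (b - t) *
          qbinom (qm i i) b (b - t)) *
        (∑ l ∈ Finset.range (m - b + 1), (-1 : K) ^ l * qm i i ^ (l * (l - 1) / 2) *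
          (qm i i ^ b * (qm i j * qm j i)) ^ l * qbinom (qm i i) (m - b) l)) •
        ws K (List.replicate (m - b) i ++ j :: List.replicate b i) := by
    rw [mul_assoc, Finset.sum_mul_sum, Finset.mul_sum, Finset.sum_smul]
    apply Finset.sum_congr rfl
    intro t _
    rw [Finset.mul_sum, Finset.sum_smul]
    apply Finset.sum_congr rfl
    intro l _
    congr 1
    ring
  rw [hpull]
  rcases Nat.eq_zero_or_pos b with hb0 | hb1
  · -- b = 0 : the second factor vanishes
    subst hb0
    rw [gauss (qm i i) (m - 0) (qm i i ^ 0 * (qm i j * qm j i))]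
    rw [Finset.prod_eq_zero (i := m - 1) (Finset.mem_range.mpr (by omega))
      (by rw [pow_zero, one_mul, hq, sub_self])]
    rw [mul_zero, zero_smul]
  · -- b ≥ 1 : the first factor vanishes
    have hrefl : ∑ t ∈ Finset.range (b + 1), (-1 : K) ^ (b - t) *
          qm i i ^ ((b - t) * ((b - t) - 1) / 2) * (1 : K) ^ (b - t) *
          qbinom (qm i i) b (b - t)
        = ∑ t ∈ Finset.range (b + 1), (-1 : K) ^ t *
          qm i i ^ (t * (t - 1) / 2) * (1 : K) ^ t * qbinom (qm i i) b t := by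
      rw [← Finset.sum_range_reflect]
      apply Finset.sum_congr rfl
      intro t ht
      rw [Finset.mem_range] at ht
      rw [show b + 1 - 1 - t = b - t from by omega, show b - (b - t) = t from by omega]
    rw [hrefl, gauss (qm i i) b 1]
    rw [Finset.prod_eq_zero (i := 0) (Finset.mem_range.mpr (by omega))
      (by rw [pow_zero, one_mul, sub_self])]
    rw [mul_zero, zero_mul, zero_smul]

end SerreAux

/-- for a symmetrizable GCM `(a_{ij})` and parameters with
`q_{ij}q_{ji} = q_{ii}^{a_{ij}}` and `q_{ii}` not a root of unity, the quantum
Serre relation holds in the quantum shuffle algebra: for `i ≠ j`,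
`∑_{k=0}^{1-a_{ij}} (-1)^k binom(1-a_{ij},k)_{q_{ii}} q_{ii}^{k(k-1)/2} q_{ij}^k
w_i^{⋆(1-a_{ij}-k)} ⋆ w_j ⋆ w_i^{⋆k} = 0`. -/
theorem shuffle_serre_relation (a : I → I → ℤ) (d : I → ℤ)
    (hd : ∀ i, 0 < d i) (hsym : ∀ i j, d i * a i j = d j * a j i)
    (hdiag : ∀ i, a i i = 2) (hoff : ∀ i j, i ≠ j → a i j ≤ 0)
    (qm : I → I → K) (hq0 : ∀ i j, qm i j ≠ 0)
    (hrel : ∀ i j, qm i j * qm j i = qm i i ^ (a i j))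
    (hru : ∀ i, ∀ n : ℕ, 0 < n → qm i i ^ n ≠ 1)
    (i j : I) (hij : i ≠ j) :
    ∑ k ∈ Finset.range ((1 - a i j).toNat + 1),
        ((-1 : K) ^ k * qbinom (qm i i) (1 - a i j).toNat k *
            qm i i ^ (k * (k - 1) / 2) * qm i j ^ k) •
          shuffle qm
            (shuffle qm (starPow qm i ((1 - a i j).toNat - k)) (wgen K j))
            (starPow qm i k)
      = 0 := by
  have ha : a i j ≤ 0 := hoff i j hij
  have hm : 1 ≤ (1 - a i j).toNat := by omega
  have hq : qm i i ^ ((1 - a i j).toNat - 1) * (qm i j * qm j i) = 1 := by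
    rw [hrel i j, ← zpow_natCast (qm i i) ((1 - a i j).toNat - 1), ← zpow_add₀ (hq0 i i)]
    rw [show ((((1 - a i j).toNat - 1 : ℕ) : ℤ) + a i j) = 0 from by omega]
    exact zpow_zero _
  exact SerreAux.serre_core qm i j _ hm hq
end
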